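/- For the subdivided complete graph K'_s (obtained from K_s by subdividing every edge once), the pointed-neighborhood conflict-free chromatic parameter equals s, while the (closed) neighborhood conflict-free chromatic parameter equals 2 for s ≥ 2. -/

import Mathlib

/-- `C` is conflict-free for pointed neighborhoods: every nonempty pointed
neighborhood `Ṅ(v)` contains a uniquely colored vertex. -/
def PointedCF {W : Type*} (G : SimpleGraph W) (C : W → ℕ) : Prop :=
  ∀ v, (∃ u, G.Adj v u) →
    ∃ u, G.Adj v u ∧ ∀ w, G.Adj v w → w ≠ u → C w ≠ C u

/-- `C` is conflict-free for closed neighborhoods: every closed neighborhood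
`N(v) = {v} ∪ Γ(v)` contains a uniquely colored vertex. -/
def ClosedCF {W : Type*} (G : SimpleGraph W) (C : W → ℕ) : Prop :=
  ∀ v, ∃ u, (u = v ∨ G.Adj v u) ∧
    ∀ w, (w = v ∨ G.Adj v w) → w ≠ u → C w ≠ C u

noncomputable def pointedCFNum {W : Type*} (G : SimpleGraph W) : ℕ :=
  sInf {k | ∃ C : W → ℕ, (∀ v, C v < k) ∧ PointedCF G C}

noncomputable def closedCFNum {W : Type*} (G : SimpleGraph W) : ℕ :=
  sInf {k | ∃ C : W → ℕ, (∀ v, C v < k) ∧ ClosedCF G C}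

/-- The adjacency of the subdivided complete graph `K'_s`: the original
vertices are `Fin s`, and each pair `i < j` gets a subdivision vertex
adjacent exactly to `i` and `j`. -/
def KsubAdj (s : ℕ) :
    (Fin s ⊕ {p : Fin s × Fin s // p.1 < p.2}) →
    (Fin s ⊕ {p : Fin s × Fin s // p.1 < p.2}) → Prop
  | Sum.inl i, Sum.inr e => i = e.1.1 ∨ i = e.1.2
  | Sum.inr e, Sum.inl i => i = e.1.1 ∨ i = e.1.2
  | _, _ => False

/-- The subdivided complete graph `K'_s`. -/
def Ksub (s : ℕ) : SimpleGraph (Fin s ⊕ {p : Fin s × Fin s // p.1 < p.2}) where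
  Adj := KsubAdj s
  symm := by
    constructor
    intro x y h
    cases x <;> cases y <;> simp_all [KsubAdj]
  loopless := by
    constructor
    intro x h
    cases x <;> simp_all [KsubAdj]

/-- For the subdivided complete graph `K'_s` with `s ≥ 2`, the pointed
conflict-free chromatic parameter equals `s` while the closed-neighborhood
conflict-free chromatic parameter equals `2`. -/
lemma ksub_adj_inl_inr {s : ℕ} (i : Fin s) (e : {p : Fin s × Fin s // p.1 < p.2}) :
    (Ksub s).Adj (Sum.inl i) (Sum.inr e) ↔ i = e.1.1 ∨ i = e.1.2 := Iff.rfl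

lemma ksub_adj_inr_inl {s : ℕ} (e : {p : Fin s × Fin s // p.1 < p.2}) (i : Fin s) :
    (Ksub s).Adj (Sum.inr e) (Sum.inl i) ↔ i = e.1.1 ∨ i = e.1.2 := Iff.rfl

lemma ksub_not_adj_inl_inl {s : ℕ} (i j : Fin s) :
    ¬ (Ksub s).Adj (Sum.inl i) (Sum.inl j) := fun h => h

lemma ksub_not_adj_inr_inr {s : ℕ} (e f : {p : Fin s × Fin s // p.1 < p.2}) :
    ¬ (Ksub s).Adj (Sum.inr e) (Sum.inr f) := fun h => h

lemma edge_ext {s : ℕ} {e f : {p : Fin s × Fin s // p.1 < p.2}}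
    (h1 : e.1.1 = f.1.1) (h2 : e.1.2 = f.1.2) : e = f := by
  cases e with
  | mk p hp => cases f with
    | mk q hq =>
      simp only [Subtype.mk.injEq]
      exact Prod.ext h1 h2

/-- If two edges both contain `i` and their coordinate sums agree mod `s`,
they are equal. -/
lemma edge_sum_inj {s : ℕ} (i : Fin s) (f g : {p : Fin s × Fin s // p.1 < p.2})
    (hf : i = f.1.1 ∨ i = f.1.2) (hg : i = g.1.1 ∨ i = g.1.2)
    (h : (f.1.1.val + f.1.2.val) % s = (g.1.1.val + g.1.2.val) % s) : f = g := by
  have hcancel : ∀ a b : ℕ, a < s → b < s →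
      (i.val + a) % s = (i.val + b) % s → a = b := by
    intro a b ha hb hab
    have h2 : a % s = b % s := Nat.ModEq.add_left_cancel' i.val hab
    rwa [Nat.mod_eq_of_lt ha, Nat.mod_eq_of_lt hb] at h2
  rcases hf with hf | hf <;> rcases hg with hg | hg
  · -- i = f.1.1, i = g.1.1
    rw [← hf, ← hg] at h
    have := hcancel _ _ f.1.2.isLt g.1.2.isLt h
    exact edge_ext (hf ▸ hg ▸ rfl) (Fin.ext this)
  · -- i = f.1.1, i = g.1.2 : then i < f.1.2 and g.1.1 < i , but f.1.2 = g.1.1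
    exfalso
    rw [← hf, ← hg, Nat.add_comm g.1.1.val i.val] at h
    have heq := hcancel _ _ f.1.2.isLt g.1.1.isLt h
    have h1 : i < f.1.2 := hf ▸ f.2
    have h2 : g.1.1 < i := hg ▸ g.2
    have := Fin.lt_def.mp h1
    have := Fin.lt_def.mp h2
    omega
  · -- i = f.1.2, i = g.1.1
    exfalso
    rw [← hf, ← hg, Nat.add_comm f.1.1.val i.val] at h
    have heq := hcancel _ _ f.1.1.isLt g.1.2.isLt h
    have h1 : f.1.1 < i := hf ▸ f.2
    have h2 : i < g.1.2 := hg ▸ g.2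
    have := Fin.lt_def.mp h1
    have := Fin.lt_def.mp h2
    omega
  · -- i = f.1.2, i = g.1.2
    rw [← hf, ← hg, Nat.add_comm f.1.1.val i.val, Nat.add_comm g.1.1.val i.val] at h
    have := hcancel _ _ f.1.1.isLt g.1.1.isLt h
    exact edge_ext (Fin.ext this) (hf ▸ hg ▸ rfl)

theorem ksub_cf_params (s : ℕ) (hs : 2 ≤ s) :
    pointedCFNum (Ksub s) = s ∧ closedCFNum (Ksub s) = 2 := by
  have hspos : 0 < s := by omega
  have i0 : Fin s := ⟨0, by omega⟩
  have i1 : Fin s := ⟨1, by omega⟩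
  constructor
  · -- pointed part
    have hmem : s ∈ {k | ∃ C : (Fin s ⊕ {p : Fin s × Fin s // p.1 < p.2}) → ℕ,
        (∀ v, C v < k) ∧ PointedCF (Ksub s) C} := by
      refine ⟨fun x => match x with
        | Sum.inl i => i.val
        | Sum.inr e => (e.1.1.val + e.1.2.val) % s, ?_, ?_⟩
      · intro v
        match v with
        | Sum.inl i => exact i.isLt
        | Sum.inr e => exact Nat.mod_lt _ hspos
      · intro v hv
        match v with
        | Sum.inl i =>
          obtain ⟨u, hu⟩ := hv
          refine ⟨u, hu, ?_⟩
          intro w hw hwu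
          match w, u with
          | Sum.inr f, Sum.inr g =>
            intro hc
            exact hwu (congrArg Sum.inr (edge_sum_inj i f g
              ((ksub_adj_inl_inr i f).mp hw) ((ksub_adj_inl_inr i g).mp hu) hc))
          | Sum.inl j, _ => exact absurd hw (ksub_not_adj_inl_inl i j)
          | Sum.inr f, Sum.inl j => exact absurd hu (ksub_not_adj_inl_inl i j)
        | Sum.inr e =>
          refine ⟨Sum.inl e.1.1, Or.inl rfl, ?_⟩
          intro w hw hwu
          match w with
          | Sum.inl j =>
            rcases (ksub_adj_inr_inl e j).mp hw with h | h
            · exact absurd (congrArg Sum.inl h) hwu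
            · subst h
              simp only []
              intro hc
              exact absurd (Fin.ext hc) (ne_of_gt e.2)
          | Sum.inr f => exact absurd hw (ksub_not_adj_inr_inr e f)
    refine le_antisymm (Nat.sInf_le hmem) (le_csInf ⟨s, hmem⟩ ?_)
    rintro k ⟨C, hlt, hcf⟩
    have key : ∀ i j : Fin s, i < j → C (Sum.inl i) ≠ C (Sum.inl j) := by
      intro i j hij
      obtain ⟨u, hu, huniq⟩ := hcf (Sum.inr ⟨(i, j), hij⟩) ⟨Sum.inl i, Or.inl rfl⟩
      match u with
      | Sum.inr f => exact absurd hu (ksub_not_adj_inr_inr _ f)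
      | Sum.inl m =>
        rcases (ksub_adj_inr_inl _ m).mp hu with hm | hm
        · subst hm
          have := huniq (Sum.inl j) (Or.inr rfl)
            (by intro h; exact absurd (Sum.inl.inj h) (ne_of_gt hij))
          exact fun hc => this hc.symm
        · subst hm
          exact huniq (Sum.inl i) (Or.inl rfl)
            (by intro h; exact absurd (Sum.inl.inj h) (ne_of_lt hij))
    have hinj : Function.Injective
        (fun i : Fin s => (⟨C (Sum.inl i), hlt _⟩ : Fin k)) := by
      intro i j hij
      have hval : C (Sum.inl i) = C (Sum.inl j) := congrArg Fin.val hij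
      rcases lt_trichotomy i j with h | h | h
      · exact absurd hval (key i j h)
      · exact h
      · exact absurd hval.symm (key j i h)
    have := Fintype.card_le_of_injective _ hinj
    simpa using this
  · -- closed part
    have hmem : 2 ∈ {k | ∃ C : (Fin s ⊕ {p : Fin s × Fin s // p.1 < p.2}) → ℕ,
        (∀ v, C v < k) ∧ ClosedCF (Ksub s) C} := by
      refine ⟨fun x => match x with
        | Sum.inl _ => 0
        | Sum.inr _ => 1, ?_, ?_⟩
      · intro v
        match v with
        | Sum.inl i => exact two_pos
        | Sum.inr e => exact one_lt_two
      · intro v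
        match v with
        | Sum.inl i =>
          refine ⟨Sum.inl i, Or.inl rfl, ?_⟩
          intro w hw hwu
          match w with
          | Sum.inl j =>
            rcases hw with h | h
            · exact absurd h hwu
            · exact absurd h (ksub_not_adj_inl_inl i j)
          | Sum.inr f => exact Nat.one_ne_zero
        | Sum.inr e =>
          refine ⟨Sum.inr e, Or.inl rfl, ?_⟩
          intro w hw hwu
          match w with
          | Sum.inl j => exact Nat.zero_ne_one
          | Sum.inr f =>
            rcases hw with h | h
            · exact absurd h hwu
            · exact absurd h (ksub_not_adj_inr_inr e f)
    refine le_antisymm (Nat.sInf_le hmem) (le_csInf ⟨2, hmem⟩ ?_)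
    rintro k ⟨C, hlt, hcf⟩
    by_contra hk
    push_neg at hk
    have hzero : ∀ v, C v = 0 := by
      intro v
      have := hlt v
      omega
    set v0 : Fin s := ⟨0, by omega⟩ with hv0
    set v1 : Fin s := ⟨1, by omega⟩ with hv1
    have h01 : v0 < v1 := by
      rw [Fin.lt_def]
      exact Nat.zero_lt_one
    set e01 : {p : Fin s × Fin s // p.1 < p.2} := ⟨(v0, v1), h01⟩ with he01
    obtain ⟨u, hu, huniq⟩ := hcf (Sum.inl v0)
    by_cases hcase : u = Sum.inl v0
    · exact huniq (Sum.inr e01)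
        (Or.inr ((ksub_adj_inl_inr v0 e01).mpr (Or.inl rfl)))
        (by rw [hcase]; exact fun h => by cases h)
        (by rw [hzero, hzero])
    · exact huniq (Sum.inl v0) (Or.inl rfl) (Ne.symm hcase) (by rw [hzero, hzero])
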